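/- arXiv:1305.3894 — 2 statements merged into one kernel-verified Lean document; each statement's English description precedes it below -/
import Mathlib

section
/- The number of vertices of the polytope of ordered one-qubit spectra for L qubits (L ≥ 3) equals 2^L − L. More precisely, the points (p₁,…,p_L) ∈ [0,1/2]^L with each p_i ∈ {0, 1/2} and |{i : p_i = 1/2}| ≠ 1 are exactly the vertices of the polytope defined by 0 ≤ p_i ≤ 1/2 and p_i ≤ Σ_{j≠i} p_j for all i, and there are 2^L − L of them. -/
open BigOperators


set_option maxHeartbeats 1000000

def Spoly (L : ℕ) : Set (Fin L → ℝ) :=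
  {p : Fin L → ℝ | ∀ i, 0 ≤ p i ∧ p i ≤ 1/2 ∧ p i ≤ ∑ j ∈ Finset.univ.erase i, p j}

lemma memS_iff {L : ℕ} (p : Fin L → ℝ) :
    p ∈ Spoly L ↔ ∀ i, 0 ≤ p i ∧ p i ≤ 1/2 ∧ 2 * p i ≤ ∑ j, p j := by
  unfold Spoly
  simp only [Set.mem_setOf_eq]
  refine forall_congr' fun i => and_congr_right fun _ => and_congr_right fun _ => ?_
  rw [Finset.sum_erase_eq_sub (Finset.mem_univ i)]
  constructor <;> intro h <;> linarith

lemma pert {L : ℕ} {S : Set (Fin L → ℝ)} {p : Fin L → ℝ}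
    (hp : p ∈ Set.extremePoints ℝ S) {v : Fin L → ℝ} {ε : ℝ} (hε : 0 < ε)
    (h₁ : p + ε • v ∈ S) (h₂ : p - ε • v ∈ S) : v = 0 := by
  have hmem : p ∈ openSegment ℝ (p - ε • v) (p + ε • v) := by
    refine ⟨1/2, 1/2, by norm_num, by norm_num, by norm_num, ?_⟩
    module
  have h := hp.2 h₂ h₁ hmem
  have h0 : ε • v = 0 := by
    have : p - (p - ε • v) = p - p := by rw [h]
    simpa using this
  rcases smul_eq_zero.1 h0 with h | h
  · exact absurd h (ne_of_gt hε)
  · exact h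

lemma pert_mem_add {L : ℕ} {p v : Fin L → ℝ} {ε : ℝ}
    (h : ∀ m, 0 ≤ p m + ε * v m ∧ p m + ε * v m ≤ 1/2 ∧
      2 * (p m + ε * v m) ≤ ∑ j, (p j + ε * v j)) :
    p + ε • v ∈ Spoly L := by
  rw [memS_iff]; intro m
  simpa only [Pi.add_apply, Pi.smul_apply, smul_eq_mul] using h m

lemma pert_mem_sub {L : ℕ} {p v : Fin L → ℝ} {ε : ℝ}
    (h : ∀ m, 0 ≤ p m - ε * v m ∧ p m - ε * v m ≤ 1/2 ∧
      2 * (p m - ε * v m) ≤ ∑ j, (p j - ε * v j)) :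
    p - ε • v ∈ Spoly L := by
  rw [memS_iff]; intro m
  simpa only [Pi.sub_apply, Pi.smul_apply, smul_eq_mul] using h m

lemma sum_ite_one {L : ℕ} (i : Fin L) (c : ℝ) :
    ∑ m : Fin L, (if m = i then c else 0) = c := by
  simp [Finset.sum_ite_eq']

lemma sum_ite_two {L : ℕ} {i k : Fin L} (hik : i ≠ k) (a b : ℝ) :
    ∑ m : Fin L, (if m = i then a else if m = k then b else 0) = a + b := by
  rw [← Finset.add_sum_erase _ _ (Finset.mem_univ i)]
  simp only [if_pos rfl]
  congr 1
  rw [Finset.sum_congr rfl (fun m hm => ?_), Finset.sum_ite_eq' (Finset.univ.erase i) k (fun _ => b)]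
  · simp [hik.symm]
  · rw [if_neg]
    exact Finset.ne_of_mem_erase hm

lemma sum_pert_add {L : ℕ} (p v : Fin L → ℝ) (ε : ℝ) :
    ∑ j, (p j + ε * v j) = (∑ j, p j) + ε * ∑ j, v j := by
  rw [Finset.sum_add_distrib, ← Finset.mul_sum]

lemma sum_pert_sub {L : ℕ} (p v : Fin L → ℝ) (ε : ℝ) :
    ∑ j, (p j - ε * v j) = (∑ j, p j) - ε * ∑ j, v j := by
  rw [Finset.sum_sub_distrib, ← Finset.mul_sum]

lemma sum_half_count {L : ℕ} (p : Fin L → ℝ) (t : Finset (Fin L))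
    (h : ∀ j ∈ t, p j = 0 ∨ p j = 1/2) :
    ∑ j ∈ t, p j = ((t.filter (fun j => p j = 1/2)).card : ℝ) * (1/2) := by
  classical
  rw [← Finset.sum_filter_add_sum_filter_not t (fun j => p j = 1/2)]
  have h1 : ∑ j ∈ t.filter (fun j => p j = 1/2), p j
      = ((t.filter (fun j => p j = 1/2)).card : ℝ) * (1/2) := by
    rw [Finset.sum_congr rfl (fun j hj => (Finset.mem_filter.1 hj).2), Finset.sum_const,
      nsmul_eq_mul]
  have h2 : ∑ j ∈ t.filter (fun j => ¬ p j = 1/2), p j = 0 := by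
    apply Finset.sum_eq_zero
    intro j hj
    rcases h j (Finset.mem_filter.1 hj).1 with h' | h'
    · exact h'
    · exact absurd h' (Finset.mem_filter.1 hj).2
  rw [h1, h2, add_zero]

lemma ext_vals {L : ℕ} {p : Fin L → ℝ}
    (hp : p ∈ Set.extremePoints ℝ (Spoly L)) :
    ∀ i, p i = 0 ∨ p i = 1/2 := by
  classical
  have hpS := (memS_iff p).1 hp.1
  set s := ∑ j, p j with hs
  by_contra hcon
  push_neg at hcon
  obtain ⟨i, hi0', hi2'⟩ := hcon
  have hi0 : 0 < p i := lt_of_le_of_ne (hpS i).1 (Ne.symm hi0')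
  have hi2 : p i < 1/2 := lt_of_le_of_ne (hpS i).2.1 hi2'
  by_cases hT : ∃ k, 2 * p k = s
  · obtain ⟨k, htk⟩ := hT
    by_cases hT2 : ∃ l, l ≠ k ∧ 2 * p l = s
    · -- two tight constraints: p supported on {k,l} with equal values
      obtain ⟨l, hlk, htl⟩ := hT2
      have hkl : p k = p l := by linarith
      have hrest0 : ∑ m ∈ (Finset.univ.erase k).erase l, p m = 0 := by
        have e1 : p k + ∑ m ∈ Finset.univ.erase k, p m = s :=
          Finset.add_sum_erase _ _ (Finset.mem_univ k)
        have e2 : p l + ∑ m ∈ (Finset.univ.erase k).erase l, p m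
            = ∑ m ∈ Finset.univ.erase k, p m :=
          Finset.add_sum_erase _ _ (Finset.mem_erase.2 ⟨hlk, Finset.mem_univ l⟩)
        linarith
      have hrest : ∀ m, m ≠ k → m ≠ l → p m = 0 := by
        intro m hmk hml
        have := (Finset.sum_eq_zero_iff_of_nonneg
          (fun j _ => (hpS j).1)).1 hrest0 m
          (by simp [hmk, hml])
        exact this
      have hik : p k = p i := by
        by_cases h1 : i = k
        · rw [h1]
        · by_cases h2 : i = l
          · rw [h2, hkl]
          · exact absurd (hrest i h1 h2) (ne_of_gt hi0)
      have hk0 : 0 < p k := hik ▸ hi0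
      have hk2 : p k < 1/2 := hik ▸ hi2
      set ε := min (p k) (1/2 - p k) with hεdef
      have hεpos : 0 < ε := lt_min hk0 (by linarith)
      have hε1 : ε ≤ p k := min_le_left _ _
      have hε2 : ε ≤ 1/2 - p k := min_le_right _ _
      have hv : (fun m => if m = k then (1:ℝ) else if m = l then 1 else 0) = 0 := by
        refine pert hp hεpos (pert_mem_add ?_) (pert_mem_sub ?_)
        · intro m
          rw [sum_pert_add, sum_ite_two (Ne.symm hlk)]
          by_cases hmk : m = k
          · subst hmk; simp only [eq_self_iff_true, if_true, mul_one]
            refine ⟨by linarith, by linarith, by linarith⟩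
          · by_cases hml : m = l
            · subst hml; simp only [if_neg hmk, eq_self_iff_true, if_true, mul_one]
              rw [← hkl]
              refine ⟨by linarith, by linarith, by linarith⟩
            · simp only [if_neg hmk, if_neg hml, mul_zero, add_zero, sub_zero]
              have h0 := hrest m hmk hml
              have := (hpS m).2.2
              refine ⟨by linarith, by linarith, by linarith⟩
        · intro m
          rw [sum_pert_sub, sum_ite_two (Ne.symm hlk)]
          by_cases hmk : m = k
          · subst hmk; simp only [eq_self_iff_true, if_true, mul_one]
            refine ⟨by linarith, by linarith, by linarith⟩
          · by_cases hml : m = l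
            · subst hml; simp only [if_neg hmk, eq_self_iff_true, if_true, mul_one]
              rw [← hkl]
              refine ⟨by linarith, by linarith, by linarith⟩
            · simp only [if_neg hmk, if_neg hml, mul_zero, add_zero, sub_zero]
              have h0 := hrest m hmk hml
              refine ⟨by linarith, by linarith, by linarith⟩
      have := congrFun hv k
      simp at this
    · -- unique tight constraint k
      push_neg at hT2
      have huniq : ∀ l, l ≠ k → 2 * p l < s := fun l hl =>
        lt_of_le_of_ne (hpS l).2.2 (hT2 l hl)
      by_cases hex : ∃ j, j ≠ k ∧ 0 < p j ∧ p j < 1/2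
      · obtain ⟨j, hjk, hj0, hj2⟩ := hex
        have hk0 : 0 < p k := by
          have := (hpS j).2.2; linarith
        have hjne : j ∈ Finset.univ.erase k := Finset.mem_erase.2 ⟨hjk, Finset.mem_univ j⟩
        set δ := (Finset.univ.erase k).inf' ⟨j, hjne⟩ (fun m => s - 2 * p m) with hδdef
        have hδpos : 0 < δ := by
          rw [hδdef]; refine (Finset.lt_inf'_iff _).2 ?_
          intro m hm
          have := huniq m (Finset.ne_of_mem_erase hm)
          linarith
        have hδle : ∀ m, m ≠ k → δ ≤ s - 2 * p m := fun m hm =>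
          Finset.inf'_le _ (Finset.mem_erase.2 ⟨hm, Finset.mem_univ m⟩)
        by_cases hk2 : p k < 1/2
        · -- perturb along e_j + e_k
          set ε := min (min (p j) (1/2 - p j)) (min (min (p k) (1/2 - p k)) (δ/3)) with hεdef
          have hεpos : 0 < ε :=
            lt_min (lt_min hj0 (by linarith))
              (lt_min (lt_min hk0 (by linarith)) (by linarith))
          have hε1 : ε ≤ p j := le_trans (min_le_left _ _) (min_le_left _ _)
          have hε2 : ε ≤ 1/2 - p j := le_trans (min_le_left _ _) (min_le_right _ _)
          have hε3 : ε ≤ p k :=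
            le_trans (min_le_right _ _) (le_trans (min_le_left _ _) (min_le_left _ _))
          have hε4 : ε ≤ 1/2 - p k :=
            le_trans (min_le_right _ _) (le_trans (min_le_left _ _) (min_le_right _ _))
          have hε5 : ε ≤ δ/3 := le_trans (min_le_right _ _) (min_le_right _ _)
          have hv : (fun m => if m = j then (1:ℝ) else if m = k then 1 else 0) = 0 := by
            refine pert hp hεpos (pert_mem_add ?_) (pert_mem_sub ?_)
            · intro m
              rw [sum_pert_add, sum_ite_two hjk]
              by_cases hmj : m = j
              · subst hmj; simp only [eq_self_iff_true, if_true, mul_one]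
                have := (hpS m).2.2
                refine ⟨by linarith, by linarith, by linarith⟩
              · by_cases hmk : m = k
                · subst hmk; simp only [if_neg hmj, eq_self_iff_true, if_true, mul_one]
                  refine ⟨by linarith, by linarith, by linarith⟩
                · simp only [if_neg hmj, if_neg hmk, mul_zero, add_zero, sub_zero]
                  have := (hpS m).2.2
                  refine ⟨(hpS m).1, (hpS m).2.1, by linarith⟩
            · intro m
              rw [sum_pert_sub, sum_ite_two hjk]
              by_cases hmj : m = j
              · subst hmj; simp only [eq_self_iff_true, if_true, mul_one]
                have := (hpS m).2.2
                refine ⟨by linarith, by linarith, by linarith⟩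
              · by_cases hmk : m = k
                · subst hmk; simp only [if_neg hmj, eq_self_iff_true, if_true, mul_one]
                  refine ⟨by linarith, by linarith, by linarith⟩
                · simp only [if_neg hmj, if_neg hmk, mul_zero, add_zero, sub_zero]
                  have h5 := hδle m hmk
                  refine ⟨(hpS m).1, (hpS m).2.1, by linarith⟩
          have := congrFun hv j
          simp at this
        · -- p k = 1/2
          have hk12 : p k = 1/2 := le_antisymm (hpS k).2.1 (not_lt.1 hk2)
          by_cases hex2 : ∃ m0, m0 ≠ j ∧ m0 ≠ k ∧ 0 < p m0 ∧ p m0 < 1/2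
          · obtain ⟨m0, hm0j, hm0k, hm00, hm02⟩ := hex2
            -- perturb along e_j - e_{m0}; total sum unchanged
            set ε := min (min (p j) (1/2 - p j)) (min (min (p m0) (1/2 - p m0)) (δ/3))
              with hεdef
            have hεpos : 0 < ε :=
              lt_min (lt_min hj0 (by linarith))
                (lt_min (lt_min hm00 (by linarith)) (by linarith))
            have hε1 : ε ≤ p j := le_trans (min_le_left _ _) (min_le_left _ _)
            have hε2 : ε ≤ 1/2 - p j := le_trans (min_le_left _ _) (min_le_right _ _)
            have hε3 : ε ≤ p m0 :=
              le_trans (min_le_right _ _) (le_trans (min_le_left _ _) (min_le_left _ _))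
            have hε4 : ε ≤ 1/2 - p m0 :=
              le_trans (min_le_right _ _) (le_trans (min_le_left _ _) (min_le_right _ _))
            have hε5 : ε ≤ δ/3 := le_trans (min_le_right _ _) (min_le_right _ _)
            have hδj := hδle j hjk
            have hδm0 := hδle m0 hm0k
            have hv : (fun m => if m = j then (1:ℝ) else if m = m0 then -1 else 0) = 0 := by
              refine pert hp hεpos (pert_mem_add ?_) (pert_mem_sub ?_)
              · intro m
                rw [sum_pert_add, sum_ite_two (Ne.symm hm0j)]
                by_cases hmj : m = j
                · subst hmj; simp only [eq_self_iff_true, if_true, mul_one]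
                  refine ⟨by linarith, by linarith, by linarith⟩
                · by_cases hmm : m = m0
                  · subst hmm; simp only [if_neg hmj, eq_self_iff_true, if_true]
                    have := (hpS m).2.2
                    refine ⟨by linarith, by linarith, by linarith⟩
                  · simp only [if_neg hmj, if_neg hmm, mul_zero, add_zero, sub_zero]
                    have := (hpS m).2.2
                    refine ⟨(hpS m).1, (hpS m).2.1, by linarith⟩
              · intro m
                rw [sum_pert_sub, sum_ite_two (Ne.symm hm0j)]
                by_cases hmj : m = j
                · subst hmj; simp only [eq_self_iff_true, if_true, mul_one]
                  refine ⟨by linarith, by linarith, by linarith⟩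
                · by_cases hmm : m = m0
                  · subst hmm; simp only [if_neg hmj, eq_self_iff_true, if_true]
                    refine ⟨by linarith, by linarith, by linarith⟩
                  · simp only [if_neg hmj, if_neg hmm, mul_zero, add_zero, sub_zero]
                    have := (hpS m).2.2
                    refine ⟨(hpS m).1, (hpS m).2.1, by linarith⟩
            have := congrFun hv j
            simp at this
          · -- all coordinates outside {j,k} lie in {0,1/2}: arithmetic contradiction
            push_neg at hex2
            have hall : ∀ m, m ≠ j → m ≠ k → p m = 0 ∨ p m = 1/2 := by
              intro m hmj hmk
              rcases eq_or_lt_of_le (hpS m).1 with h | h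
              · exact Or.inl h.symm
              · exact Or.inr (le_antisymm (hpS m).2.1 (hex2 m hmj hmk h))
            set t := (Finset.univ.erase k).erase j with ht
            have e1 : p k + ∑ m ∈ Finset.univ.erase k, p m = s :=
              Finset.add_sum_erase _ _ (Finset.mem_univ k)
            have e2 : p j + ∑ m ∈ t, p m = ∑ m ∈ Finset.univ.erase k, p m :=
              Finset.add_sum_erase _ _ hjne
            have hrest : ∑ m ∈ t, p m
                = ((t.filter (fun m => p m = 1/2)).card : ℝ) * (1/2) := by
              apply sum_half_count
              intro m hm
              rw [ht] at hm
              exact hall m (Finset.ne_of_mem_erase hm)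
                (Finset.ne_of_mem_erase (Finset.mem_of_mem_erase hm))
            set c := (t.filter (fun m => p m = 1/2)).card with hc
            have hcR : (c : ℝ) < 1 := by
              have hc0 : (0:ℝ) ≤ (c:ℝ) := Nat.cast_nonneg c
              nlinarith [hj0, hk12, htk, e1, e2, hrest]
            have hc0 : c = 0 := by
              have : c < 1 := by exact_mod_cast hcR
              omega
            rw [hc0] at hrest
            simp only [Nat.cast_zero, zero_mul] at hrest
            linarith
      · -- no strictly interior coordinate other than k: then i = k and arithmetic contradiction
        push_neg at hex
        have hik : i = k := by
          by_contra h
          have := hex i h hi0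
          linarith
        subst hik
        have hall : ∀ m, m ≠ i → p m = 0 ∨ p m = 1/2 := by
          intro m hmi
          rcases eq_or_lt_of_le (hpS m).1 with h | h
          · exact Or.inl h.symm
          · exact Or.inr (le_antisymm (hpS m).2.1 (hex m hmi h))
        have e1 : p i + ∑ m ∈ Finset.univ.erase i, p m = s :=
          Finset.add_sum_erase _ _ (Finset.mem_univ i)
        have hrest : ∑ m ∈ Finset.univ.erase i, p m
            = (((Finset.univ.erase i).filter (fun m => p m = 1/2)).card : ℝ) * (1/2) := by
          apply sum_half_count
          intro m hm
          exact hall m (Finset.ne_of_mem_erase hm)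
        set c := ((Finset.univ.erase i).filter (fun m => p m = 1/2)).card with hc
        have hcR : (c : ℝ) < 1 := by
          have hc0 : (0:ℝ) ≤ (c:ℝ) := Nat.cast_nonneg c
          nlinarith [hi2, htk, e1, hrest]
        have hc0 : c = 0 := by
          have : c < 1 := by exact_mod_cast hcR
          omega
        rw [hc0] at hrest
        simp only [Nat.cast_zero, zero_mul] at hrest
        linarith
  · -- no tight constraint
    push_neg at hT
    have hstrict : ∀ k, 2 * p k < s := fun k => lt_of_le_of_ne (hpS k).2.2 (hT k)
    have hne : (Finset.univ : Finset (Fin L)).Nonempty := ⟨i, Finset.mem_univ i⟩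
    set δ := Finset.univ.inf' hne (fun k => s - 2 * p k) with hδdef
    have hδpos : 0 < δ := by
      rw [hδdef, Finset.lt_inf'_iff]
      intro k _; linarith [hstrict k]
    have hδle : ∀ m, δ ≤ s - 2 * p m := fun m => Finset.inf'_le _ (Finset.mem_univ m)
    set ε := min (min (p i) (1/2 - p i)) (δ/3) with hεdef
    have hεpos : 0 < ε := lt_min (lt_min hi0 (by linarith)) (by linarith)
    have hε1 : ε ≤ p i := le_trans (min_le_left _ _) (min_le_left _ _)
    have hε2 : ε ≤ 1/2 - p i := le_trans (min_le_left _ _) (min_le_right _ _)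
    have hε3 : ε ≤ δ/3 := min_le_right _ _
    have hv : (fun m => if m = i then (1:ℝ) else 0) = 0 := by
      refine pert hp hεpos (pert_mem_add ?_) (pert_mem_sub ?_)
      · intro m
        rw [sum_pert_add, sum_ite_one]
        by_cases hmi : m = i
        · subst hmi; simp only [eq_self_iff_true, if_true, mul_one]
          refine ⟨by linarith, by linarith, ?_⟩
          have := hδle m
          linarith
        · simp only [if_neg hmi, mul_zero, add_zero, sub_zero, mul_one]
          have := hstrict m
          refine ⟨(hpS m).1, (hpS m).2.1, by linarith⟩
      · intro m
        rw [sum_pert_sub, sum_ite_one]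
        by_cases hmi : m = i
        · subst hmi; simp only [eq_self_iff_true, if_true, mul_one]
          have := (hpS m).2.2
          refine ⟨by linarith, by linarith, by linarith⟩
        · simp only [if_neg hmi, mul_zero, add_zero, sub_zero, mul_one]
          have := hδle m
          refine ⟨(hpS m).1, (hpS m).2.1, by linarith⟩
    have := congrFun hv i
    simp at this

lemma ext_ncard_ne_one {L : ℕ} {p : Fin L → ℝ} (hpS : p ∈ Spoly L)
    (hall : ∀ i, p i = 0 ∨ p i = 1/2) : {i | p i = 1/2}.ncard ≠ 1 := by
  intro h1
  obtain ⟨k, hk⟩ := Set.ncard_eq_one.1 h1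
  have hpk : p k = 1/2 := by
    have : k ∈ {i | p i = 1/2} := by rw [hk]; rfl
    exact this
  have hothers : ∀ j, j ≠ k → p j = 0 := by
    intro j hj
    rcases hall j with h | h
    · exact h
    · exfalso
      have : j ∈ ({k} : Set (Fin L)) := hk ▸ h
      exact hj this
  have hsum : ∑ j, p j = p k :=
    Finset.sum_eq_single_of_mem k (Finset.mem_univ k) (fun j _ hj => hothers j hj)
  have := ((memS_iff p).1 hpS k).2.2
  rw [hsum, hpk] at this
  linarith

lemma V_subset_ext {L : ℕ} (p : Fin L → ℝ)
    (h1 : ∀ i, p i = 0 ∨ p i = 1/2) (h2 : {i | p i = 1/2}.ncard ≠ 1) :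
    p ∈ Set.extremePoints ℝ (Spoly L) := by
  have hbounds : ∀ i, 0 ≤ p i ∧ p i ≤ 1/2 := by
    intro i; rcases h1 i with h | h <;> rw [h] <;> norm_num
  constructor
  · rw [memS_iff]
    intro i
    refine ⟨(hbounds i).1, (hbounds i).2, ?_⟩
    rcases h1 i with h | h
    · rw [h]
      simpa using Finset.sum_nonneg fun j _ => (hbounds j).1
    · obtain ⟨j, hj, hji⟩ : ∃ j, p j = 1/2 ∧ j ≠ i := by
        by_contra hc
        push_neg at hc
        apply h2
        have : {k | p k = 1/2} = {i} := by
          ext k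
          simp only [Set.mem_setOf_eq, Set.mem_singleton_iff]
          constructor
          · intro hk; by_contra hki; exact hki (hc k hk)
          · intro hk; rw [hk]; exact h
        rw [this, Set.ncard_singleton]
      have hsum : ∑ k ∈ Finset.univ.erase i, p k ≥ p j + p i - p i := by
        have : p j + (∑ k ∈ (Finset.univ.erase i).erase j, p k)
            = ∑ k ∈ Finset.univ.erase i, p k :=
          Finset.add_sum_erase _ _ (by simp [hji])
        have hnn : 0 ≤ ∑ k ∈ (Finset.univ.erase i).erase j, p k :=
          Finset.sum_nonneg fun k _ => (hbounds k).1
        linarith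
      have htot : ∑ k, p k = (∑ k ∈ Finset.univ.erase i, p k) + p i := by
        rw [Finset.sum_erase_eq_sub (Finset.mem_univ i)]; ring
      rw [htot, h, hj] at *
      linarith [hsum]
  · rintro x hx y hy ⟨a, b, ha, hb, hab, hxy⟩
    rw [memS_iff] at hx hy
    have key : x = p ∧ y = p := by
      have hco : ∀ i, a * x i + b * y i = p i := fun i => congrFun hxy i
      have hxp : ∀ i, x i = p i ∧ y i = p i := by
        intro i
        have hi := hco i
        rcases h1 i with h | h
        · rw [h] at hi ⊢
          have h1' := (hx i).1
          have h2' := (hy i).1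
          constructor <;> nlinarith
        · rw [h] at hi ⊢
          have h1' := (hx i).2.1
          have h2' := (hy i).2.1
          constructor <;> nlinarith
      exact ⟨funext fun i => (hxp i).1, funext fun i => (hxp i).2⟩
    exact key.1

lemma count_V (L : ℕ) :
    ({p : Fin L → ℝ | (∀ i, p i = 0 ∨ p i = 1/2) ∧ {i | p i = 1/2}.ncard ≠ 1}).ncard
      = 2 ^ L - L := by
  classical
  set f : Finset (Fin L) → (Fin L → ℝ) := fun A i => if i ∈ A then 1/2 else 0 with hf
  have hinj : Function.Injective f := by
    intro A B hAB
    ext i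
    have := congrFun hAB i
    simp only [hf] at this
    by_cases hA : i ∈ A <;> by_cases hB : i ∈ B <;>
      simp [hA, hB] at this ⊢ <;> norm_num at this
  have hset : ∀ A : Finset (Fin L), {i | f A i = 1/2} = ↑A := by
    intro A
    ext i
    simp only [hf, Set.mem_setOf_eq, Finset.coe_insert, Finset.mem_coe]
    by_cases hA : i ∈ A <;> simp [hA]
  have himg : {p : Fin L → ℝ | (∀ i, p i = 0 ∨ p i = 1/2) ∧ {i | p i = 1/2}.ncard ≠ 1}
      = f '' {A : Finset (Fin L) | A.card ≠ 1} := by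
    ext p
    simp only [Set.mem_setOf_eq, Set.mem_image]
    constructor
    · rintro ⟨hall, hn1⟩
      refine ⟨Finset.univ.filter (fun i => p i = 1/2), ?_, ?_⟩
      · intro hcard
        apply hn1
        have : {i | p i = 1/2} = ↑(Finset.univ.filter (fun i => p i = 1/2)) := by
          ext i; simp
        rw [this, Set.ncard_coe_finset]
        exact hcard
      · funext i
        simp only [hf, Finset.mem_filter, Finset.mem_univ, true_and]
        rcases hall i with h | h <;> simp [h] <;> norm_num
    · rintro ⟨A, hA, rfl⟩
      refine ⟨fun i => ?_, ?_⟩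
      · simp only [hf]
        by_cases hi : i ∈ A <;> simp [hi]
      · rw [hset A, Set.ncard_coe_finset]
        exact hA
  rw [himg, Set.ncard_image_of_injective _ hinj]
  have hdiff : {A : Finset (Fin L) | A.card ≠ 1}
      = Set.univ \ {A : Finset (Fin L) | A.card = 1} := by
    ext A; simp
  rw [hdiff, Set.ncard_diff (Set.subset_univ _), Set.ncard_univ,
    Nat.card_eq_fintype_card, Fintype.card_finset, Fintype.card_fin]
  congr 1
  have hrange : {A : Finset (Fin L) | A.card = 1}
      = (fun i : Fin L => ({i} : Finset (Fin L))) '' Set.univ := by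
    ext A
    simp only [Set.mem_setOf_eq, Set.image_univ, Set.mem_range]
    rw [Finset.card_eq_one]
    tauto
  rw [hrange, Set.ncard_image_of_injective _ (fun a b h => Finset.singleton_injective h),
    Set.ncard_univ, Nat.card_eq_fintype_card, Fintype.card_fin]


/-- For `L ≥ 3`, the extreme points (vertices) of the polytope
`{p ∈ ℝ^L : 0 ≤ p_i ≤ 1/2, p_i ≤ Σ_{j≠i} p_j}` are exactly the points with all
coordinates in `{0, 1/2}` and with the number of coordinates equal to `1/2` different
from `1`; there are `2^L − L` of them. -/
theorem stmt2 (L : ℕ) (hL : 3 ≤ L) :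
    (Set.extremePoints ℝ
        {p : Fin L → ℝ | ∀ i, 0 ≤ p i ∧ p i ≤ 1/2 ∧ p i ≤ ∑ j ∈ Finset.univ.erase i, p j}
      = {p : Fin L → ℝ | (∀ i, p i = 0 ∨ p i = 1/2) ∧ {i | p i = 1/2}.ncard ≠ 1}) ∧
    ({p : Fin L → ℝ | (∀ i, p i = 0 ∨ p i = 1/2) ∧ {i | p i = 1/2}.ncard ≠ 1}).ncard
      = 2 ^ L - L := by
  constructor
  · ext p
    constructor
    · intro hp
      have hp' : p ∈ Set.extremePoints ℝ (Spoly L) := hp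
      have h1 := ext_vals hp'
      exact ⟨h1, ext_ncard_ne_one hp'.1 h1⟩
    · rintro ⟨h1, h2⟩
      exact V_subset_ext p h1 h2
  · exact count_V L
end

section
/- For a normalized state φ in the eigenspace H_{-L+2} described above (spanned by |1 1…1⟩ and the vectors |0⟩⊗|1…1 0_l 1…1⟩ for l=2,…,L), the shifted eigenvalues λ_l = 1/2 − min(spec ρ_l(φ)) satisfy −λ₁ + Σ_{l=2}^{L} λ_l = L/2 − 1. -/
open Matrix BigOperators

/-- The reduced one-qubit density matrix of the `l`-th qubit of the state
`φ ∈ (ℂ²)^⊗L` (partial trace of `|φ⟩⟨φ|` over all other qubits). -/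
noncomputable def reducedDensity (L : ℕ) (φ : (Fin L → Fin 2) → ℂ) (l : Fin L) :
    Matrix (Fin 2) (Fin 2) ℂ :=
  fun i j => ∑ s : Fin L → Fin 2,
    if s l = i then φ s * star (φ (Function.update s l j)) else 0

/-- `wPattern L l` is, for `l = 1`, `|1 1…1⟩`, and for `l ≥ 2` the basis state with the
first and `l`-th qubits in `|0⟩` and the rest in `|1⟩`. -/
def wPattern (L : ℕ) [NeZero L] (l : Fin L) : Fin L → Fin 2 :=
  if l = 0 then (fun _ => 1) else (fun m => if m = 0 ∨ m = l then 0 else 1)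

lemma wPattern_ne_off (L : ℕ) [NeZero L] {m n l : Fin L} (hmn : m ≠ n) :
    ∃ k, k ≠ l ∧ wPattern L m k ≠ wPattern L n k := by
  unfold wPattern
  rcases eq_or_ne m 0 with hm | hm
  · subst hm
    have hn : n ≠ 0 := fun h => hmn h.symm
    rcases eq_or_ne l 0 with hl | hl
    · exact ⟨n, by simpa [hl] using hn, by simp [hn, hmn.symm]⟩
    · exact ⟨0, Ne.symm hl, by simp [hn]⟩
  · rcases eq_or_ne n 0 with hn | hn
    · subst hn
      rcases eq_or_ne l 0 with hl | hl
      · exact ⟨m, by simpa [hl] using hm, by simp [hm]⟩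
      · exact ⟨0, Ne.symm hl, by simp [hm]⟩
    · rcases eq_or_ne l m with hl | hl
      · exact ⟨n, by rw [hl]; exact Ne.symm hmn, by simp [hm, hn, hmn.symm]⟩
      · exact ⟨m, Ne.symm hl, by simp [hm, hn, hmn]⟩

lemma update_w_eq (L : ℕ) [NeZero L] (m n : Fin L) (l : Fin L) (j : Fin 2) :
    Function.update (wPattern L m) l j = wPattern L n ↔ n = m ∧ j = wPattern L m l := by
  constructor
  · intro h
    rcases eq_or_ne m n with rfl | hmn
    · exact ⟨rfl, Function.update_eq_self_iff.mp h⟩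
    · obtain ⟨k, hkl, hk⟩ := wPattern_ne_off L hmn (l := l)
      exfalso
      apply hk
      have := congrFun h k
      rwa [Function.update_of_ne hkl] at this
  · rintro ⟨rfl, rfl⟩
    exact Function.update_eq_self _ _

lemma reduced_eq (L : ℕ) [NeZero L] (c : Fin L → ℂ) (l : Fin L) :
    reducedDensity L (fun s => ∑ m, c m * (if s = wPattern L m then 1 else 0)) l
      = Matrix.diagonal (fun i => ∑ m ∈ Finset.univ.filter (fun m => wPattern L m l = i),
          (‖c m‖ : ℂ) ^ 2) := by
  ext i j
  simp only [reducedDensity]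
  have step1 : ∀ s : Fin L → Fin 2,
      (if s l = i then
          (∑ m, c m * (if s = wPattern L m then 1 else 0)) *
            star (∑ n, c n * (if Function.update s l j = wPattern L n then 1 else 0)) else 0)
      = ∑ m, if s = wPattern L m then
          (if s l = i then c m *
            star (∑ n, c n * (if Function.update s l j = wPattern L n then 1 else 0)) else 0) else 0 := by
    intro s
    by_cases h : s l = i
    · simp only [h, if_true, Finset.sum_mul]
      refine Finset.sum_congr rfl fun m _ => ?_
      split <;> simp
    · simp [h]
  rw [Finset.sum_congr rfl fun s _ => step1 s, Finset.sum_comm]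
  have step2 : ∀ m : Fin L,
      (∑ s : Fin L → Fin 2, if s = wPattern L m then
          (if s l = i then c m *
            star (∑ n, c n * (if Function.update s l j = wPattern L n then 1 else 0)) else 0) else 0)
      = if wPattern L m l = i ∧ j = wPattern L m l then c m * star (c m) else 0 := by
    intro m
    rw [Finset.sum_ite_eq' Finset.univ (wPattern L m)]
    have inner : (∑ n, c n * (if Function.update (wPattern L m) l j = wPattern L n then 1 else 0))
        = if j = wPattern L m l then c m else 0 := by
      have : ∀ n : Fin L, c n * (if Function.update (wPattern L m) l j = wPattern L n then 1 else 0)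
          = if n = m ∧ j = wPattern L m l then c n else 0 := by
        intro n
        simp only [update_w_eq]
        split <;> simp
      rw [Finset.sum_congr rfl fun n _ => this n]
      simp only [ite_and]
      rw [Finset.sum_ite_eq' Finset.univ m]
      simp
    rw [inner]
    by_cases h2 : j = wPattern L m l <;> simp [h2]
  rw [Finset.sum_congr rfl fun m _ => step2 m]
  by_cases hij : i = j
  · subst hij
    rw [Matrix.diagonal_apply_eq, Finset.sum_filter]
    refine Finset.sum_congr rfl fun m _ => ?_
    by_cases h : wPattern L m l = i
    · simp only [h, if_true, and_self, Complex.star_def, Complex.mul_conj,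
        Complex.normSq_eq_norm_sq]
      push_cast
      ring
    · simp [h]
  · rw [Matrix.diagonal_apply_ne _ hij]
    refine Finset.sum_eq_zero fun m _ => ?_
    rw [if_neg]
    rintro ⟨h1, h2⟩
    exact hij (h1 ▸ h2 ▸ rfl)

lemma spec_diag (d : Fin 2 → ℂ) (x : ℂ) :
    x ∈ spectrum ℂ (Matrix.diagonal d) ↔ x = d 0 ∨ x = d 1 := by
  rw [spectrum.mem_iff]
  have h : (algebraMap ℂ (Matrix (Fin 2) (Fin 2) ℂ)) x - Matrix.diagonal d
      = Matrix.diagonal (fun i => x - d i) := by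
    rw [Matrix.algebraMap_eq_diagonal, ← Matrix.diagonal_sub]
    congr 1
  rw [h, Matrix.isUnit_iff_isUnit_det, Matrix.det_diagonal, isUnit_iff_ne_zero, not_not,
    Fin.prod_univ_two, mul_eq_zero, sub_eq_zero, sub_eq_zero]

/-- For a normalized state `φ = c₁|1…1⟩ + Σ_{l≥2} c_l |0⟩⊗|1…1 0_l 1…1⟩` in the
eigenspace `H_{-L+2}` (with `|c₁|² ≥ Σ_{k≥2}|c_k|²`), the shifted eigenvalues
`λ_l = 1/2 − p_l`, with `p_l` the smaller eigenvalue of `ρ_l(φ)`, satisfy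
`−λ₁ + Σ_{l=2}^{L} λ_l = L/2 − 1`. -/
theorem stmt7 (L : ℕ) [NeZero L] (hL : 2 ≤ L) (c : Fin L → ℂ)
    (hnorm : ∑ l, ‖c l‖ ^ 2 = 1)
    (hbig : ∑ k ∈ Finset.univ.erase 0, ‖c k‖ ^ 2 ≤ ‖c 0‖ ^ 2)
    (p lam : Fin L → ℝ)
    (hmin : ∀ l,
      ((p l : ℂ) ∈ spectrum ℂ
          (reducedDensity L (fun s => ∑ m, c m * (if s = wPattern L m then 1 else 0)) l)) ∧
      ∀ x : ℝ, (x : ℂ) ∈ spectrum ℂ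
          (reducedDensity L (fun s => ∑ m, c m * (if s = wPattern L m then 1 else 0)) l)
        → p l ≤ x)
    (hlam : ∀ l, lam l = 1/2 - p l) :
    -lam 0 + ∑ l ∈ Finset.univ.erase 0, lam l = L / 2 - 1 := by
  set N : Fin L → ℝ := fun m => ‖c m‖ ^ 2 with hN
  have hNnn : ∀ m, 0 ≤ N m := fun m => by positivity
  set D : Fin L → Fin 2 → ℝ :=
    fun l i => ∑ m ∈ Finset.univ.filter (fun m => wPattern L m l = i), N m with hD
  have key : ∀ l : Fin L, ∀ x : ℂ,
      (x ∈ spectrum ℂ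
          (reducedDensity L (fun s => ∑ m, c m * (if s = wPattern L m then 1 else 0)) l))
      ↔ (x = ((D l 0 : ℝ) : ℂ) ∨ x = ((D l 1 : ℝ) : ℂ)) := by
    intro l x
    rw [reduced_eq, spec_diag]
    simp only [hD, hN]
    push_cast
    rfl
  have hp : ∀ l : Fin L, (p l = D l 0 ∨ p l = D l 1) ∧ p l ≤ D l 0 ∧ p l ≤ D l 1 := by
    intro l
    obtain ⟨h1, h2⟩ := hmin l
    rw [key l] at h1
    refine ⟨?_, ?_, ?_⟩
    · rcases h1 with h | h
      · exact Or.inl (by exact_mod_cast h)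
      · exact Or.inr (by exact_mod_cast h)
    · exact h2 _ ((key l _).mpr (Or.inl rfl))
    · exact h2 _ ((key l _).mpr (Or.inr rfl))
  -- compute the filters
  have hw0 : ∀ m : Fin L, wPattern L m 0 = if m = 0 then 1 else 0 := by
    intro m
    unfold wPattern
    rcases eq_or_ne m 0 with h | h <;> simp [h]
  have hwl : ∀ l m : Fin L, l ≠ 0 → wPattern L m l = if m = l then 0 else 1 := by
    intro l m hl
    rcases eq_or_ne m 0 with rfl | h
    · simp [wPattern, Ne.symm hl]
    · simp only [wPattern, if_neg h]
      by_cases h2 : m = l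
      · simp [h2]
      · simp [hl, h2, Ne.symm h2]
  have hD00 : D 0 0 = ∑ m ∈ Finset.univ.erase 0, N m := by
    have hfil : Finset.univ.filter (fun m : Fin L => wPattern L m 0 = 0)
        = Finset.univ.erase 0 := by
      ext m
      by_cases h : m = 0 <;> simp [hw0, h]
    simp only [hD]
    rw [hfil]
  have hD01 : D 0 1 = N 0 := by
    have hfil : Finset.univ.filter (fun m : Fin L => wPattern L m 0 = 1) = {0} := by
      ext m
      by_cases h : m = 0 <;> simp [hw0, h]
    simp only [hD]
    rw [hfil, Finset.sum_singleton]
  have hDl0 : ∀ l : Fin L, l ≠ 0 → D l 0 = N l := by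
    intro l hl
    have hfil : Finset.univ.filter (fun m : Fin L => wPattern L m l = 0) = {l} := by
      ext m
      by_cases h : m = l
      · subst h; simp [hwl m m hl]
      · simp [hwl l m hl, h]
    simp only [hD]
    rw [hfil, Finset.sum_singleton]
  have hDl1 : ∀ l : Fin L, l ≠ 0 → D l 1 = ∑ m ∈ Finset.univ.erase l, N m := by
    intro l hl
    have hfil : Finset.univ.filter (fun m : Fin L => wPattern L m l = 1)
        = Finset.univ.erase l := by
      ext m
      by_cases h : m = l
      · subst h; simp [hwl m m hl]
      · simp [hwl l m hl, h]
    simp only [hD]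
    rw [hfil]
  have hsum : ∀ l : Fin L, (∑ m ∈ Finset.univ.erase l, N m) + N l = 1 := by
    intro l
    rw [Finset.sum_erase_add _ _ (Finset.mem_univ l)]
    exact hnorm
  have hS0 : (∑ m ∈ Finset.univ.erase 0, N m) = 1 - N 0 := by
    have := hsum 0
    linarith
  have hbig' : 1 - N 0 ≤ N 0 := by rw [← hS0]; exact hbig
  have hp0 : p 0 = 1 - N 0 := by
    obtain ⟨h1, h2, h3⟩ := hp 0
    rw [hD00, hD01, hS0] at h1
    rw [hD00, hS0] at h2
    rw [hD01] at h3
    rcases h1 with h | h <;> linarith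
  have hpl : ∀ l : Fin L, l ≠ 0 → p l = N l := by
    intro l hl
    obtain ⟨h1, h2, h3⟩ := hp l
    have hle : N l ≤ ∑ m ∈ Finset.univ.erase 0, N m :=
      Finset.single_le_sum (fun m _ => hNnn m)
        (Finset.mem_erase.mpr ⟨hl, Finset.mem_univ l⟩)
    have h4 : (∑ m ∈ Finset.univ.erase l, N m) = 1 - N l := by
      have := hsum l; linarith
    rw [hDl0 l hl, hDl1 l hl, h4] at h1
    rw [hDl0 l hl] at h2
    rw [hDl1 l hl, h4] at h3
    rcases h1 with h | h
    · exact h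
    · rw [hS0] at hle
      linarith
  have hcard : (Finset.univ.erase (0 : Fin L)).card = L - 1 := by
    rw [Finset.card_erase_of_mem (Finset.mem_univ _), Finset.card_univ, Fintype.card_fin]
  have hsumlam : ∑ l ∈ Finset.univ.erase 0, lam l
      = (L - 1 : ℝ) * (1/2) - (1 - N 0) := by
    have : ∀ l ∈ Finset.univ.erase (0 : Fin L), lam l = 1/2 - N l := by
      intro l hl
      rw [hlam l, hpl l (Finset.mem_erase.mp hl).1]
    rw [Finset.sum_congr rfl this, Finset.sum_sub_distrib, Finset.sum_const, hcard, hS0,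
      nsmul_eq_mul]
    have : ((L - 1 : ℕ) : ℝ) = (L : ℝ) - 1 := by
      have : 1 ≤ L := le_trans one_le_two hL
      push_cast [this]
      ring
    rw [this]
  rw [hsumlam, hlam 0, hp0]
  ring
end
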